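/- Let $G = \mathrm{GL}_3(\mathbb{F}_p)$, $B \subset G$ the upper-triangular Borel, and $\chi = \eta^a \otimes \eta^b \otimes \eta^c : B \to \mathbb{Z}_p^\times$ with $a, b, c$ pairwise distinct modulo $p - 1$ ($\eta$ the Teichmüller character). Let $s_0 \in S_3$ be the longest element $(13)$, and define $T : \mathrm{Ind}_B^G \chi \to \mathrm{Ind}_B^G \chi^{s_0}$ and $T' : \mathrm{Ind}_B^G \chi^{s_0} \to \mathrm{Ind}_B^G \chi$ by $(Tf)(g) = \sum_{u \in U_{s_0}} f(P_{s_0} u g)$ and similarly for $T'$, where $U_{s_0} = U$ is the full unipotent upper-triangular subgroup and $P_{s_0}$ its permutation matrix. Then $T' \circ T = p^3 \cdot \mathrm{id}$. -/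

import Mathlib

open Matrix Finset



set_option linter.unusedSectionVars false
set_option linter.unnecessarySeqFocus false
set_option maxHeartbeats 1000000

section CharSums

variable {p : ℕ} [Fact p.Prime] {η : ZMod p → ℤ_[p]}
  (hηmul : ∀ x y : ZMod p, η (x * y) = η x * η y)
  (hηred : ∀ x : ZMod p, PadicInt.toZMod (η x) = x)

include hηmul hηred

omit hηmul in
lemma eta_inj : Function.Injective η := fun x y h => by
  rw [← hηred x, ← hηred y, h]

lemma eta_one : η 1 = 1 := by
  have h1 : η 1 * η 1 = η 1 * 1 := by rw [mul_one, ← hηmul, mul_one]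
  have hne : η 1 ≠ 0 := by
    intro h
    have := hηred 1
    rw [h, map_zero] at this
    exact one_ne_zero this.symm
  exact (mul_left_cancel₀ hne h1)

lemma eta_zero : η 0 = 0 := by
  have h1 : η 0 * (η 0 - 1) = 0 := by
    rw [mul_sub, mul_one, ← hηmul, mul_zero, sub_self]
  rcases mul_eq_zero.mp h1 with h | h
  · exact h
  · exfalso
    have h0 : η 0 = 1 := by rw [sub_eq_zero] at h; exact h
    have := hηred 0
    rw [h0] at this
    rw [show PadicInt.toZMod (1 : ℤ_[p]) = 1 from map_one _] at this
    exact one_ne_zero this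

lemma eta_inv_mul {t : ZMod p} (ht : t ≠ 0) : η t * η t⁻¹ = 1 := by
  rw [← hηmul, mul_inv_cancel₀ ht, eta_one hηmul hηred]

lemma eta_pow (t : ZMod p) (k : ℕ) : η t ^ k = η (t ^ k) := by
  induction k with
  | zero => rw [pow_zero, pow_zero, eta_one hηmul hηred]
  | succ n ih => rw [pow_succ, pow_succ, ih, hηmul]

lemma key_sum (m n : ℕ) (h : ¬ m ≡ n [MOD p - 1]) :
    ∑ d : ZMod p, η d ^ m * η d⁻¹ ^ n = 0 := by
  obtain ⟨g, hg⟩ := IsCyclic.exists_generator (α := (ZMod p)ˣ)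
  have horder : orderOf g = p - 1 := by
    rw [orderOf_eq_card_of_forall_mem_zpowers hg, Nat.card_eq_fintype_card,
      ZMod.card_units_eq_totient, Nat.totient_prime (Fact.out : p.Prime)]
  have hgm : g ^ m ≠ g ^ n := by
    intro he
    exact h (by rwa [pow_eq_pow_iff_modEq, horder] at he)
  set t : ZMod p := (g : ZMod p) with htdef
  have ht : t ≠ 0 := g.ne_zero
  have htm : t ^ m ≠ t ^ n := by
    intro he
    apply hgm
    ext
    push_cast
    exact he
  have hC : η t ^ m * η t⁻¹ ^ n ≠ 1 := by
    intro hC1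
    apply htm
    have h2 : η t ^ m * η t⁻¹ ^ n * η t ^ n = η t ^ n := by rw [hC1, one_mul]
    have h3 : η t⁻¹ ^ n * η t ^ n = 1 := by
      rw [← mul_pow, mul_comm (η t⁻¹), eta_inv_mul hηmul hηred ht, one_pow]
    rw [mul_assoc, h3, mul_one] at h2
    have h4 : η (t ^ m) = η (t ^ n) := by
      rw [← eta_pow hηmul hηred, ← eta_pow hηmul hηred]; exact h2
    exact eta_inj hηred h4
  set S := ∑ d : ZMod p, η d ^ m * η d⁻¹ ^ n with hS
  have hre : S = (η t ^ m * η t⁻¹ ^ n) * S := by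
    calc S = ∑ d : ZMod p, η (t * d) ^ m * η (t * d)⁻¹ ^ n := by
            exact (Equiv.sum_comp (Equiv.mulLeft₀ t ht) (fun d => η d ^ m * η d⁻¹ ^ n)).symm
      _ = ∑ d : ZMod p, (η t ^ m * η t⁻¹ ^ n) * (η d ^ m * η d⁻¹ ^ n) := by
            apply Finset.sum_congr rfl
            intro d _
            rw [_root_.mul_inv_rev, mul_comm d⁻¹ t⁻¹, hηmul, hηmul, mul_pow, mul_pow]
            ring
      _ = (η t ^ m * η t⁻¹ ^ n) * S := by rw [← Finset.mul_sum]
  have hz : (η t ^ m * η t⁻¹ ^ n - 1) * S = 0 := by rw [sub_mul, one_mul, ← hre, sub_self]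
  rcases mul_eq_zero.mp hz with h' | h'
  · exact absurd (sub_eq_zero.mp h') hC
  · exact h'

lemma key_sum' (m n : ℕ) (h : ¬ m ≡ n [MOD p - 1]) :
    ∑ d ∈ Finset.univ.erase (0 : ZMod p), η d ^ m * η d⁻¹ ^ n = 0 := by
  have h0 : η (0 : ZMod p) ^ m * η (0 : ZMod p)⁻¹ ^ n = 0 := by
    rw [_root_.inv_zero, eta_zero hηmul hηred]
    rcases Nat.eq_zero_or_pos m with hm | hm
    · have hn : n ≠ 0 := by rintro rfl; rw [hm] at h; exact h rfl
      rw [zero_pow hn, mul_zero]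
    · rw [zero_pow hm.ne', zero_mul]
  rw [Finset.sum_erase_eq_sub (Finset.mem_univ 0), key_sum hηmul hηred m n h, h0, sub_zero]

end CharSums

section SumTools

variable {p : ℕ} [Fact p.Prime]

lemma triple_shift (φ : ZMod p → ZMod p → ZMod p → ℤ_[p]) (x₀ y₀ z₀ : ZMod p) :
    ∑ x : ZMod p, ∑ y : ZMod p, ∑ z : ZMod p, φ (x+x₀) (y+x₀*z+y₀) (z+z₀)
    = ∑ x : ZMod p, ∑ y : ZMod p, ∑ z : ZMod p, φ x y z := by
  calc ∑ x : ZMod p, ∑ y : ZMod p, ∑ z : ZMod p, φ (x+x₀) (y+x₀*z+y₀) (z+z₀)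
      = ∑ x : ZMod p, ∑ z : ZMod p, ∑ y : ZMod p, φ (x+x₀) (y+x₀*z+y₀) (z+z₀) :=
        Finset.sum_congr rfl (fun x _ => Finset.sum_comm)
    _ = ∑ x : ZMod p, ∑ z : ZMod p, ∑ y : ZMod p, φ (x+x₀) y (z+z₀) := by
        refine Finset.sum_congr rfl fun x _ => Finset.sum_congr rfl fun z _ => ?_
        exact Fintype.sum_equiv (Equiv.addRight (x₀*z + y₀)) _ _
          (fun y => by simp [add_assoc])
    _ = ∑ x : ZMod p, ∑ z : ZMod p, ∑ y : ZMod p, φ (x+x₀) y z := by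
        refine Finset.sum_congr rfl fun x _ => ?_
        exact Fintype.sum_equiv (Equiv.addRight z₀) _ _ (fun z => rfl)
    _ = ∑ x : ZMod p, ∑ z : ZMod p, ∑ y : ZMod p, φ x y z :=
        Fintype.sum_equiv (Equiv.addRight x₀) _ _ (fun x => rfl)
    _ = ∑ x : ZMod p, ∑ y : ZMod p, ∑ z : ZMod p, φ x y z :=
        Finset.sum_congr rfl (fun x _ => Finset.sum_comm)

lemma sum_shear (H : ZMod p → ℤ_[p]) :
    ∑ x : ZMod p, ∑ z : ZMod p, H (x*z)
    = (p : ℤ_[p]) * H 0 + ((p - 1 : ℕ) : ℤ_[p]) * ∑ v : ZMod p, H v := by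
  rw [← Finset.add_sum_erase _ _ (Finset.mem_univ (0 : ZMod p))]
  congr 1
  · simp only [zero_mul, Finset.sum_const, Finset.card_univ, ZMod.card, nsmul_eq_mul]
  · rw [Finset.sum_congr rfl (fun x hx => Equiv.sum_comp
      (Equiv.mulLeft₀ x (Finset.mem_erase.mp hx).1) H)]
    rw [Finset.sum_const, Finset.card_erase_of_mem (Finset.mem_univ _), Finset.card_univ,
      ZMod.card, nsmul_eq_mul]

lemma sum_ifzero (F : ZMod p → ℤ_[p]) :
    (∑ x : ZMod p, if x = 0 then 0 else F x) = ∑ x ∈ Finset.univ.erase (0 : ZMod p), F x := by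
  rw [← Finset.sum_erase (Finset.univ) (f := fun x => if x = (0:ZMod p) then 0 else F x)
    (if_pos rfl)]
  exact Finset.sum_congr rfl fun x hx => if_neg (Finset.mem_erase.mp hx).1

end SumTools

section Cells

variable {p : ℕ} [Fact p.Prime]

noncomputable def Inn (f : Matrix (Fin 3) (Fin 3) (ZMod p) → ℤ_[p])
    (g h : Matrix (Fin 3) (Fin 3) (ZMod p)) : ℤ_[p] :=
  ∑ x : ZMod p, ∑ y : ZMod p, ∑ z : ZMod p, f (h * !![1,x,y;0,1,z;0,0,1] * g)

variable {a b c : ℕ} {η : ZMod p → ℤ_[p]}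
  (hηmul : ∀ x y : ZMod p, η (x * y) = η x * η y)
  (hηred : ∀ x : ZMod p, PadicInt.toZMod (η x) = x)
  (f : Matrix (Fin 3) (Fin 3) (ZMod p) → ℤ_[p]) (g : Matrix (Fin 3) (Fin 3) (ZMod p))
  (hf : ∀ B g : Matrix (Fin 3) (Fin 3) (ZMod p), IsUnit B.det →
      B 1 0 = 0 → B 2 0 = 0 → B 2 1 = 0 →
      f (B * g) = η (B 0 0) ^ a * η (B 1 1) ^ b * η (B 2 2) ^ c * f g)

lemma Inn_mulU (h : Matrix (Fin 3) (Fin 3) (ZMod p)) (x₀ y₀ z₀ : ZMod p) :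
    Inn f g (h * !![1,x₀,y₀;0,1,z₀;0,0,1]) = Inn f g h := by
  unfold Inn
  have hm : ∀ x y z : ZMod p,
      h * !![1,x₀,y₀;0,1,z₀;0,0,1] * !![1,x,y;0,1,z;0,0,1]
      = h * !![1,(x+x₀),(y+x₀*z+y₀);0,1,(z+z₀);0,0,1] := by
    intro x y z
    rw [Matrix.mul_assoc]
    congr 1
    rw [Matrix.mul_fin_three]
    congr 1 <;> ring
  simp_rw [hm]
  exact triple_shift (fun x y z => f (h * !![1,x,y;0,1,z;0,0,1] * g)) x₀ y₀ z₀

include hf in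
lemma Inn_mulB (B h : Matrix (Fin 3) (Fin 3) (ZMod p)) (hu : IsUnit B.det)
    (h10 : B 1 0 = 0) (h20 : B 2 0 = 0) (h21 : B 2 1 = 0) :
    Inn f g (B * h) = η (B 0 0) ^ a * η (B 1 1) ^ b * η (B 2 2) ^ c * Inn f g h := by
  unfold Inn
  have hfB : ∀ g' : Matrix (Fin 3) (Fin 3) (ZMod p),
      f (B * g') = η (B 0 0) ^ a * η (B 1 1) ^ b * η (B 2 2) ^ c * f g' :=
    fun g' => hf B g' hu h10 h20 h21
  simp_rw [Matrix.mul_assoc B, hfB, ← Finset.mul_sum]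

include hηmul hηred hf in
lemma Inn_id : Inn f g !![1,0,0;0,1,0;0,0,1] = (p : ℤ_[p])^3 * f g := by
  unfold Inn
  have h1 : ∀ x y z : ZMod p, (!![1,0,0;0,1,0;0,0,1] : Matrix (Fin 3) (Fin 3) (ZMod p))
      * !![1,x,y;0,1,z;0,0,1] * g = !![1,x,y;0,1,z;0,0,1] * g := by
    intro x y z
    rw [← Matrix.one_fin_three, Matrix.one_mul]
  simp_rw [h1]
  have hdet3 : ∀ x y z : ZMod p,
      (!![1,x,y;0,1,z;0,0,1] : Matrix (Fin 3) (Fin 3) (ZMod p)).det = 1 := by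
    intro x y z
    simp [Matrix.det_fin_three, Matrix.vecHead, Matrix.vecTail]
  have h2 : ∀ x y z : ZMod p, f (!![1,x,y;0,1,z;0,0,1] * g) = f g := by
    intro x y z
    rw [hf _ g (by rw [hdet3]; exact isUnit_one)
      (by simp [Matrix.vecHead, Matrix.vecTail])
      (by simp [Matrix.vecHead, Matrix.vecTail])
      (by simp [Matrix.vecHead, Matrix.vecTail])]
    simp [eta_one hηmul hηred, Matrix.vecHead, Matrix.vecTail]
  simp_rw [h2]
  simp only [Finset.sum_const, Finset.card_univ, ZMod.card, nsmul_eq_mul]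
  ring

-- big cell : y ≠ 0, x*z - y ≠ 0
include hf in
lemma cell_big (x y z : ZMod p) (hy : y ≠ 0) (hd : x*z - y ≠ 0) :
    Inn f g !![1,0,0;z,1,0;y,x,1]
    = η ((x*z-y)⁻¹) ^ a * η (-(x*z-y)*y⁻¹) ^ b * η y ^ c
      * Inn f g !![0,0,1;0,1,0;1,0,0] := by
  have hdec : (!![1,0,0;z,1,0;y,x,1] : Matrix (Fin 3) (Fin 3) (ZMod p))
      = !![(x*z-y)⁻¹, -x*y⁻¹, 1; 0, -(x*z-y)*y⁻¹, z; 0,0,y]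
        * (!![0,0,1;0,1,0;1,0,0] * !![1, x*y⁻¹, y⁻¹; 0, 1, z*(x*z-y)⁻¹; 0,0,1]) := by
    rw [Matrix.mul_fin_three, Matrix.mul_fin_three]
    ext i j
    fin_cases i <;> fin_cases j <;> simp <;> field_simp <;> ring
  have hdet : (!![(x*z-y)⁻¹, -x*y⁻¹, 1; 0, -(x*z-y)*y⁻¹, z; 0,0,y] :
      Matrix (Fin 3) (Fin 3) (ZMod p)).det = -1 := by
    simp [Matrix.det_fin_three, Matrix.vecHead, Matrix.vecTail]
    field_simp
    ring
  rw [hdec, Inn_mulB f g hf _ _ (by rw [hdet]; exact isUnit_one.neg)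
    (by simp [Matrix.vecHead, Matrix.vecTail]) (by simp [Matrix.vecHead, Matrix.vecTail])
    (by simp [Matrix.vecHead, Matrix.vecTail]), Inn_mulU]
  simp [Matrix.vecHead, Matrix.vecTail]

-- cell 2 : y ≠ 0, x*z = y
include hf in
lemma cell2 (x y z : ZMod p) (hy : y ≠ 0) (hx : x ≠ 0) (hxz : x*z = y) :
    Inn f g !![1,0,0;z,1,0;y,x,1]
    = η (-x*y⁻¹) ^ a * η (-z*y⁻¹) ^ b * η y ^ c * Inn f g !![0,1,0;0,0,1;1,0,0] := by
  subst hxz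
  have hz : z ≠ 0 := fun h => hy (by rw [h, mul_zero])
  have hdec : (!![1,0,0;z,1,0;x*z,x,1] : Matrix (Fin 3) (Fin 3) (ZMod p))
      = !![-x*(x*z)⁻¹, -(x*z)⁻¹, 1; 0, -z*(x*z)⁻¹, z; 0,0,x*z]
        * (!![0,1,0;0,0,1;1,0,0] * !![1, x*(x*z)⁻¹, (x*z)⁻¹; 0, 1, 0; 0,0,1]) := by
    rw [Matrix.mul_fin_three, Matrix.mul_fin_three]
    ext i j
    fin_cases i <;> fin_cases j <;> simp [Matrix.vecHead, Matrix.vecTail] <;> field_simp <;> ring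
  have hdet : (!![-x*(x*z)⁻¹, -(x*z)⁻¹, 1; 0, -z*(x*z)⁻¹, z; 0,0,x*z] :
      Matrix (Fin 3) (Fin 3) (ZMod p)).det = 1 := by
    simp [Matrix.det_fin_three, Matrix.vecHead, Matrix.vecTail]
    field_simp
  rw [hdec, Inn_mulB f g hf _ _ (by rw [hdet]; exact isUnit_one)
    (by simp [Matrix.vecHead, Matrix.vecTail]) (by simp [Matrix.vecHead, Matrix.vecTail])
    (by simp [Matrix.vecHead, Matrix.vecTail]), Inn_mulU]
  simp [Matrix.vecHead, Matrix.vecTail]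

-- cell 3 : y = 0, x ≠ 0, z ≠ 0
include hηmul hf in
lemma cell3 (x z : ZMod p) (hx : x ≠ 0) (hz : z ≠ 0) :
    Inn f g !![1,0,0;z,1,0;0,x,1]
    = (η z ^ b * η z⁻¹ ^ a) * (η x⁻¹ ^ a * η x ^ c * Inn f g !![0,0,1;1,0,0;0,1,0]) := by
  have hdec : (!![1,0,0;z,1,0;0,x,1] : Matrix (Fin 3) (Fin 3) (ZMod p))
      = !![x⁻¹*z⁻¹, 1, 0; 0, z, 1; 0, 0, x]
        * (!![0,0,1;1,0,0;0,1,0] * !![1, 0, -(x⁻¹*z⁻¹); 0, 1, x⁻¹; 0,0,1]) := by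
    rw [Matrix.mul_fin_three, Matrix.mul_fin_three]
    ext i j
    fin_cases i <;> fin_cases j <;> simp [Matrix.vecHead, Matrix.vecTail] <;> field_simp <;> ring
  have hdet : (!![x⁻¹*z⁻¹, 1, 0; 0, z, 1; 0, 0, x] :
      Matrix (Fin 3) (Fin 3) (ZMod p)).det = 1 := by
    simp [Matrix.det_fin_three, Matrix.vecHead, Matrix.vecTail]
    field_simp
  rw [hdec, Inn_mulB f g hf _ _ (by rw [hdet]; exact isUnit_one)
    (by simp [Matrix.vecHead, Matrix.vecTail]) (by simp [Matrix.vecHead, Matrix.vecTail])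
    (by simp [Matrix.vecHead, Matrix.vecTail]), Inn_mulU]
  simp [Matrix.vecHead, Matrix.vecTail]
  rw [hηmul, mul_pow]
  ring

-- cell 4 : y = 0, x = 0, z ≠ 0
include hηmul hηred hf in
lemma cell4 (z : ZMod p) (hz : z ≠ 0) :
    Inn f g !![1,0,0;z,1,0;0,0,1]
    = (η z ^ b * η z⁻¹ ^ a) * (η (-1) ^ a * Inn f g !![0,1,0;1,0,0;0,0,1]) := by
  have hdec : (!![1,0,0;z,1,0;0,0,1] : Matrix (Fin 3) (Fin 3) (ZMod p))
      = !![-z⁻¹, 1, 0; 0, z, 0; 0,0,1]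
        * (!![0,1,0;1,0,0;0,0,1] * !![1, z⁻¹, 0; 0,1,0; 0,0,1]) := by
    rw [Matrix.mul_fin_three, Matrix.mul_fin_three]
    ext i j
    fin_cases i <;> fin_cases j <;> simp [Matrix.vecHead, Matrix.vecTail] <;> field_simp <;> ring
  have hdet : (!![-z⁻¹, 1, 0; 0, z, 0; 0,0,1] :
      Matrix (Fin 3) (Fin 3) (ZMod p)).det = -1 := by
    simp [Matrix.det_fin_three, Matrix.vecHead, Matrix.vecTail]
    field_simp
  rw [hdec, Inn_mulB f g hf _ _ (by rw [hdet]; exact isUnit_one.neg)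
    (by simp [Matrix.vecHead, Matrix.vecTail]) (by simp [Matrix.vecHead, Matrix.vecTail])
    (by simp [Matrix.vecHead, Matrix.vecTail]), Inn_mulU]
  simp [Matrix.vecHead, Matrix.vecTail]
  rw [eta_one hηmul hηred, show (-z⁻¹ : ZMod p) = (-1) * z⁻¹ from by ring, hηmul, mul_pow,
    one_pow]
  ring

-- cell 5 : y = 0, z = 0, x ≠ 0
include hηmul hηred hf in
lemma cell5 (x : ZMod p) (hx : x ≠ 0) :
    Inn f g !![1,0,0;0,1,0;0,x,1]
    = (η x ^ c * η x⁻¹ ^ b) * (η (-1) ^ b * Inn f g !![1,0,0;0,0,1;0,1,0]) := by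
  have hdec : (!![1,0,0;0,1,0;0,x,1] : Matrix (Fin 3) (Fin 3) (ZMod p))
      = !![1,0,0; 0, -x⁻¹, 1; 0,0,x]
        * (!![1,0,0;0,0,1;0,1,0] * !![1,0,0;0,1,x⁻¹;0,0,1]) := by
    rw [Matrix.mul_fin_three, Matrix.mul_fin_three]
    ext i j
    fin_cases i <;> fin_cases j <;> simp [Matrix.vecHead, Matrix.vecTail] <;> field_simp <;> ring
  have hdet : (!![1,0,0; 0, -x⁻¹, 1; 0,0,x] :
      Matrix (Fin 3) (Fin 3) (ZMod p)).det = -1 := by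
    simp [Matrix.det_fin_three, Matrix.vecHead, Matrix.vecTail]
    field_simp
  rw [hdec, Inn_mulB f g hf _ _ (by rw [hdet]; exact isUnit_one.neg)
    (by simp [Matrix.vecHead, Matrix.vecTail]) (by simp [Matrix.vecHead, Matrix.vecTail])
    (by simp [Matrix.vecHead, Matrix.vecTail]), Inn_mulU]
  simp [Matrix.vecHead, Matrix.vecTail]
  rw [eta_one hηmul hηred, show (-x⁻¹ : ZMod p) = (-1) * x⁻¹ from by ring, hηmul, mul_pow,
    one_pow]
  ring

end Cells

/-- For a regular character `χ = η^a ⊗ η^b ⊗ η^c` of the Borel of `GL₃(𝔽_p)` with values in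
`ℤ_p` (`η` the Teichmüller character), the composition of the two longest-element intertwining
operators `T' ∘ T` on `Ind_B^G χ` is multiplication by `p³`. -/
theorem stmt6 (p : ℕ) [Fact p.Prime] (a b c : ℕ)
    (hab : ¬ a ≡ b [MOD p - 1]) (hbc : ¬ b ≡ c [MOD p - 1]) (hac : ¬ a ≡ c [MOD p - 1])
    (η : ZMod p → ℤ_[p])
    (hηmul : ∀ x y : ZMod p, η (x * y) = η x * η y)
    (hηred : ∀ x : ZMod p, PadicInt.toZMod (η x) = x)
    (f : Matrix (Fin 3) (Fin 3) (ZMod p) → ℤ_[p])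
    -- f ∈ Ind_B^G χ : f(Bg) = χ(B) f(g) for B upper-triangular invertible
    (hf : ∀ B g : Matrix (Fin 3) (Fin 3) (ZMod p), IsUnit B.det →
      B 1 0 = 0 → B 2 0 = 0 → B 2 1 = 0 →
      f (B * g) = η (B 0 0) ^ a * η (B 1 1) ^ b * η (B 2 2) ^ c * f g) :
    -- (T' (T f))(g) = p³ · f(g), where (T f)(g) = ∑_{u ∈ U} f (P_{s₀} u g)
    ∀ g : Matrix (Fin 3) (Fin 3) (ZMod p),
      ∑ x₁ : ZMod p, ∑ y₁ : ZMod p, ∑ z₁ : ZMod p,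
        ∑ x₂ : ZMod p, ∑ y₂ : ZMod p, ∑ z₂ : ZMod p,
          f (!![0, 0, 1; 0, 1, 0; 1, 0, 0] * !![1, x₁, y₁; 0, 1, z₁; 0, 0, 1] *
             !![0, 0, 1; 0, 1, 0; 1, 0, 0] * !![1, x₂, y₂; 0, 1, z₂; 0, 0, 1] * g)
      = (p : ℤ_[p]) ^ 3 * f g := by
  intro g
  have hmodba : ¬ b ≡ a [MOD p - 1] := fun h => hab h.symm
  have hmodcb : ¬ c ≡ b [MOD p - 1] := fun h => hbc h.symm
  have hmodca : ¬ c ≡ a [MOD p - 1] := fun h => hac h.symm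
  have hconj : ∀ x y z : ZMod p,
      (!![0, 0, 1; 0, 1, 0; 1, 0, 0] : Matrix (Fin 3) (Fin 3) (ZMod p)) *
        !![1, x, y; 0, 1, z; 0, 0, 1] * !![0, 0, 1; 0, 1, 0; 1, 0, 0]
      = !![1,0,0;z,1,0;y,x,1] := by
    intro x y z
    rw [Matrix.mul_fin_three, Matrix.mul_fin_three]
    congr 1 <;> ring
  have hInn : ∀ x y z : ZMod p,
      (∑ x₂ : ZMod p, ∑ y₂ : ZMod p, ∑ z₂ : ZMod p,
        f (!![0, 0, 1; 0, 1, 0; 1, 0, 0] * !![1, x, y; 0, 1, z; 0, 0, 1] *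
           !![0, 0, 1; 0, 1, 0; 1, 0, 0] * !![1, x₂, y₂; 0, 1, z₂; 0, 0, 1] * g))
      = Inn f g !![1,0,0;z,1,0;y,x,1] := by
    intro x y z
    simp_rw [hconj x y z]
    rfl
  simp_rw [hInn]
  rw [Finset.sum_comm]
  -- y = 0 block
  have hy0 : (∑ x : ZMod p, ∑ z : ZMod p, Inn f g !![1,0,0;z,1,0;(0:ZMod p),x,1])
      = (p:ℤ_[p])^3 * f g := by
    rw [← Finset.add_sum_erase _ _ (Finset.mem_univ (0 : ZMod p))]
    have hx0 : (∑ z : ZMod p, Inn f g !![1,0,0;z,1,0;(0:ZMod p),(0:ZMod p),1])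
        = (p:ℤ_[p])^3 * f g := by
      rw [← Finset.add_sum_erase _ _ (Finset.mem_univ (0 : ZMod p))]
      rw [show Inn f g !![1,0,0;(0:ZMod p),1,0;(0:ZMod p),(0:ZMod p),1]
          = (p:ℤ_[p])^3 * f g from Inn_id hηmul hηred f g hf]
      have h2 : ∑ z ∈ Finset.univ.erase (0:ZMod p),
          Inn f g !![1,0,0;z,1,0;(0:ZMod p),(0:ZMod p),1] = 0 := by
        rw [Finset.sum_congr rfl
          (fun z hz => cell4 hηmul hηred f g hf z (Finset.mem_erase.mp hz).1),
          ← Finset.sum_mul, key_sum' hηmul hηred b a hmodba, zero_mul]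
      rw [h2, add_zero]
    rw [hx0]
    have hx1 : ∑ x ∈ Finset.univ.erase (0:ZMod p),
        (∑ z : ZMod p, Inn f g !![1,0,0;z,1,0;(0:ZMod p),x,1]) = 0 := by
      have hxin : ∀ x ∈ Finset.univ.erase (0:ZMod p),
          (∑ z : ZMod p, Inn f g !![1,0,0;z,1,0;(0:ZMod p),x,1])
          = (η x ^ c * η x⁻¹ ^ b) * (η (-1) ^ b * Inn f g !![1,0,0;0,0,1;0,1,0]) := by
        intro x hx'
        have hx : x ≠ 0 := (Finset.mem_erase.mp hx').1
        rw [← Finset.add_sum_erase _ _ (Finset.mem_univ (0 : ZMod p))]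
        rw [show Inn f g !![1,0,0;(0:ZMod p),1,0;(0:ZMod p),x,1]
          = (η x ^ c * η x⁻¹ ^ b) * (η (-1) ^ b * Inn f g !![1,0,0;0,0,1;0,1,0]) from
          cell5 hηmul hηred f g hf x hx]
        have h3 : ∑ z ∈ Finset.univ.erase (0:ZMod p),
            Inn f g !![1,0,0;z,1,0;(0:ZMod p),x,1] = 0 := by
          rw [Finset.sum_congr rfl
            (fun z hz => cell3 hηmul f g hf x z hx (Finset.mem_erase.mp hz).1),
            ← Finset.sum_mul, key_sum' hηmul hηred b a hmodba, zero_mul]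
        rw [h3, add_zero]
      rw [Finset.sum_congr rfl hxin, ← Finset.sum_mul, key_sum' hηmul hηred c b hmodcb,
        zero_mul]
    rw [hx1, add_zero]
  -- y ≠ 0 block
  have hyne : ∀ y ∈ Finset.univ.erase (0:ZMod p),
      (∑ x : ZMod p, ∑ z : ZMod p, Inn f g !![1,0,0;z,1,0;y,x,1])
      = (η y ^ c * η y⁻¹ ^ a)
        * ((p:ℤ_[p]) * η (-1) ^ a * Inn f g !![0,0,1;0,1,0;1,0,0]) := by
    intro y hy'
    have hy : y ≠ 0 := (Finset.mem_erase.mp hy').1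
    have hcase : ∀ x z : ZMod p, Inn f g !![1,0,0;z,1,0;y,x,1]
        = (if x*z = y then η (-x*y⁻¹) ^ a * η (-z*y⁻¹) ^ b * η y ^ c
            * Inn f g !![0,1,0;0,0,1;1,0,0] else 0)
          + (if x*z = y then 0 else η ((x*z-y)⁻¹) ^ a * η (-(x*z-y)*y⁻¹) ^ b * η y ^ c
            * Inn f g !![0,0,1;0,1,0;1,0,0]) := by
      intro x z
      by_cases h : x*z = y
      · rw [if_pos h, if_pos h, add_zero]
        exact cell2 f g hf x y z hy (fun h0 => hy (by rw [← h, h0, zero_mul])) h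
      · rw [if_neg h, if_neg h, zero_add]
        exact cell_big f g hf x y z hy (sub_ne_zero_of_ne h)
    simp_rw [hcase, Finset.sum_add_distrib]
    have hP1 : (∑ x : ZMod p, ∑ z : ZMod p, if x*z = y then η (-x*y⁻¹) ^ a * η (-z*y⁻¹) ^ b
        * η y ^ c * Inn f g !![0,1,0;0,0,1;1,0,0] else 0) = 0 := by
      have hP1x : ∀ x : ZMod p, (∑ z : ZMod p, if x*z = y then η (-x*y⁻¹) ^ a
          * η (-z*y⁻¹) ^ b * η y ^ c * Inn f g !![0,1,0;0,0,1;1,0,0] else 0)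
          = if x = 0 then 0 else (η x ^ a * η x⁻¹ ^ b)
            * (η (-y⁻¹) ^ a * η (-1) ^ b * η y ^ c * Inn f g !![0,1,0;0,0,1;1,0,0]) := by
        intro x
        by_cases hx : x = 0
        · subst hx
          rw [if_pos rfl]
          rw [Finset.sum_congr rfl (fun z _ =>
            if_neg (fun hq : 0 * z = y => hy (by rw [← hq, zero_mul]))),
            Finset.sum_const_zero]
        · rw [if_neg hx]
          have hcond : ∀ z : ZMod p, (x*z = y) ↔ (z = x⁻¹*y) :=
            fun z => ⟨fun h => by rw [← h, inv_mul_cancel_left₀ hx],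
                      fun h => by rw [h, mul_inv_cancel_left₀ hx]⟩
          simp_rw [hcond]
          rw [Finset.sum_ite_eq' Finset.univ (x⁻¹*y)
            (fun z => η (-x*y⁻¹) ^ a * η (-z*y⁻¹) ^ b * η y ^ c
              * Inn f g !![0,1,0;0,0,1;1,0,0]),
            if_pos (Finset.mem_univ _)]
          rw [show (-x*y⁻¹ : ZMod p) = (-y⁻¹) * x from by ring,
            show (-(x⁻¹*y)*y⁻¹ : ZMod p) = (-1) * x⁻¹ from by field_simp,
            hηmul, hηmul, mul_pow, mul_pow]
          ring
      rw [Finset.sum_congr rfl (fun x _ => hP1x x), sum_ifzero, ← Finset.sum_mul,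
        key_sum' hηmul hηred a b hab, zero_mul]
    rw [hP1, zero_add]
    have hP2 : (∑ x : ZMod p, ∑ z : ZMod p, if x*z = y then (0:ℤ_[p])
        else η ((x*z-y)⁻¹) ^ a * η (-(x*z-y)*y⁻¹) ^ b * η y ^ c
          * Inn f g !![0,0,1;0,1,0;1,0,0])
        = (p:ℤ_[p]) * (if (0:ZMod p) = y then (0:ℤ_[p])
            else η ((0-y)⁻¹) ^ a * η (-(0-y)*y⁻¹) ^ b * η y ^ c
              * Inn f g !![0,0,1;0,1,0;1,0,0])
          + ((p - 1 : ℕ) : ℤ_[p]) * ∑ v : ZMod p, (if v = y then (0:ℤ_[p])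
            else η ((v-y)⁻¹) ^ a * η (-(v-y)*y⁻¹) ^ b * η y ^ c
              * Inn f g !![0,0,1;0,1,0;1,0,0]) :=
      sum_shear (fun v => if v = y then (0:ℤ_[p])
        else η ((v-y)⁻¹) ^ a * η (-(v-y)*y⁻¹) ^ b * η y ^ c
          * Inn f g !![0,0,1;0,1,0;1,0,0])
    rw [hP2]
    have hH0 : (if (0:ZMod p) = y then (0:ℤ_[p])
        else η ((0-y)⁻¹) ^ a * η (-(0-y)*y⁻¹) ^ b * η y ^ c
          * Inn f g !![0,0,1;0,1,0;1,0,0])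
        = (η y ^ c * η y⁻¹ ^ a) * (η (-1) ^ a * Inn f g !![0,0,1;0,1,0;1,0,0]) := by
      rw [if_neg (Ne.symm hy), zero_sub, inv_neg,
        show (-(-y)*y⁻¹ : ZMod p) = y * y⁻¹ from by ring, mul_inv_cancel₀ hy,
        eta_one hηmul hηred, one_pow,
        show (-y⁻¹ : ZMod p) = (-1) * y⁻¹ from by ring, hηmul, mul_pow]
      ring
    have hsumH : (∑ v : ZMod p, if v = y then (0:ℤ_[p])
        else η ((v-y)⁻¹) ^ a * η (-(v-y)*y⁻¹) ^ b * η y ^ c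
          * Inn f g !![0,0,1;0,1,0;1,0,0]) = 0 := by
      have step1 : (∑ v : ZMod p, if v = y then (0:ℤ_[p])
          else η ((v-y)⁻¹) ^ a * η (-(v-y)*y⁻¹) ^ b * η y ^ c
            * Inn f g !![0,0,1;0,1,0;1,0,0])
          = ∑ v : ZMod p, if v = 0 then (0:ℤ_[p]) else (η v ^ b * η v⁻¹ ^ a)
            * (η (-y⁻¹) ^ b * η y ^ c * Inn f g !![0,0,1;0,1,0;1,0,0]) := by
        rw [← Equiv.sum_comp (Equiv.addRight y) (fun v => if v = y then (0:ℤ_[p])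
          else η ((v-y)⁻¹) ^ a * η (-(v-y)*y⁻¹) ^ b * η y ^ c
            * Inn f g !![0,0,1;0,1,0;1,0,0])]
        refine Finset.sum_congr rfl fun v _ => ?_
        simp only [Equiv.coe_addRight]
        by_cases hv : v = 0
        · subst hv
          simp
        · simp only [add_eq_right, hv, if_false, add_sub_cancel_right]
          rw [
            show (-v*y⁻¹ : ZMod p) = (-y⁻¹) * v from by ring, hηmul, mul_pow]
          ring
      rw [step1, sum_ifzero, ← Finset.sum_mul, key_sum' hηmul hηred b a hmodba, zero_mul]
    rw [hsumH, mul_zero, add_zero, hH0]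
    ring
  rw [← Finset.add_sum_erase _ _ (Finset.mem_univ (0 : ZMod p)), hy0,
    Finset.sum_congr rfl hyne, ← Finset.sum_mul, key_sum' hηmul hηred c a hmodca,
    zero_mul, add_zero]
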